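/- Naimark complement (real case): Let M and N be positive integers with M < N. If there exists a real equiangular tight frame of N vectors in ℝ^M, then there exists a real equiangular tight frame of N vectors in ℝ^{N−M}. -/

import Mathlib

open scoped InnerProductSpace

/-- A real equiangular tight frame of `N` unit vectors in `ℝ^M`. -/
def IsRealETF (M N : ℕ) (φ : Fin N → EuclideanSpace ℝ (Fin M)) : Prop :=
  (∀ i, ‖φ i‖ = 1) ∧
  (∃ c : ℝ, ∀ i j, i ≠ j → |⟪φ i, φ j⟫_ℝ| = c) ∧
  (∀ x : EuclideanSpace ℝ (Fin M),
    ∑ n, ⟪x, φ n⟫_ℝ • φ n = ((N : ℝ) / (M : ℝ)) • x)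

lemma euc_sum_apply {α : Type*} (s : Finset α) {d : ℕ}
    (f : α → EuclideanSpace ℝ (Fin d)) (j : Fin d) :
    (∑ n ∈ s, f n) j = ∑ n ∈ s, f n j := by
  classical
  induction s using Finset.induction with
  | empty => rfl
  | insert _ _ h ih => rw [Finset.sum_insert h, Finset.sum_insert h, ← ih]; rfl

lemma euc_inner_eq {d : ℕ} (x y : EuclideanSpace ℝ (Fin d)) :
    ⟪x, y⟫_ℝ = ∑ n, x n * y n := by
  simp [PiLp.inner_apply, RCLike.inner_apply]
  exact Finset.sum_congr rfl (fun _ _ => mul_comm _ _)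

/-- **Naimark complement (real case).** If a real ETF of `N` vectors exists in
`ℝ^M` (with `M < N`), then a real ETF of `N` vectors exists in `ℝ^(N-M)`. -/
theorem real_etf_naimark (M N : ℕ) (hM : 1 ≤ M) (hMN : M < N)
    (h : ∃ φ : Fin N → EuclideanSpace ℝ (Fin M), IsRealETF M N φ) :
    ∃ ψ : Fin N → EuclideanSpace ℝ (Fin (N - M)), IsRealETF (N - M) N ψ := by
  classical
  obtain ⟨φ, hnorm, ⟨c, hc⟩, htight⟩ := h
  have hMpos : (0:ℝ) < M := by exact_mod_cast hM
  have hNposn : 0 < N := lt_of_le_of_lt (Nat.zero_le M) hMN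
  have hNpos : (0:ℝ) < N := by exact_mod_cast hNposn
  have hdnat : 0 < N - M := Nat.sub_pos_of_lt hMN
  have hdR : ((N - M : ℕ) : ℝ) = (N:ℝ) - M := by
    push_cast [Nat.cast_sub hMN.le]; ring
  have hdpos : (0:ℝ) < ((N - M : ℕ) : ℝ) := by exact_mod_cast hdnat
  -- Gram identity of the rows of the synthesis operator
  have hG : ∀ k l : Fin M, ∑ n, φ n k * φ n l
      = ((N:ℝ)/M) * (if k = l then 1 else 0) := by
    intro k l
    have h1 := congrArg
      (fun v : EuclideanSpace ℝ (Fin M) =>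
        ⟪v, (EuclideanSpace.single l 1 : EuclideanSpace ℝ (Fin M))⟫_ℝ)
      (htight (EuclideanSpace.single k 1))
    simp only [sum_inner, real_inner_smul_left, EuclideanSpace.inner_single_left,
      EuclideanSpace.inner_single_right, map_one, one_mul, mul_one, conj_trivial,
      PiLp.smul_apply, smul_eq_mul, EuclideanSpace.single_apply] at h1
    rw [h1]
    simp [eq_comm]
  -- the rescaled rows, as vectors in ℝ^N
  set s : ℝ := Real.sqrt ((M:ℝ)/N) with hs
  have hs2 : s * s = (M:ℝ)/N := Real.mul_self_sqrt (by positivity)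
  set r : Fin M → EuclideanSpace ℝ (Fin N) :=
    fun m => WithLp.toLp 2 (fun n => s * φ n m : Fin N → ℝ) with hr
  have hron : Orthonormal ℝ r := by
    rw [orthonormal_iff_ite]
    intro k l
    rw [euc_inner_eq]
    have : ∑ n, r k n * r l n = (s*s) * ∑ n, φ n k * φ n l := by
      rw [Finset.mul_sum]; exact Finset.sum_congr rfl (fun n _ => by ring)
    rw [this, hs2, hG k l]
    rcases eq_or_ne k l with hkl | hkl <;>
      simp [hkl]; field_simp
  -- orthogonal complement of the row space
  set K : Submodule ℝ (EuclideanSpace ℝ (Fin N)) :=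
    (Submodule.span ℝ (Set.range r))ᗮ with hK
  have hfrk : Module.finrank ℝ K = N - M := by
    have h1 : Module.finrank ℝ (Submodule.span ℝ (Set.range r)) = M := by
      rw [finrank_span_eq_card hron.linearIndependent, Fintype.card_fin]
    have h2 := Submodule.finrank_add_finrank_orthogonal
      (K := Submodule.span ℝ (Set.range r))
    rw [h1, finrank_euclideanSpace_fin] at h2
    rw [hK]
    omega
  set b : OrthonormalBasis (Fin (N - M)) ℝ K :=
    (stdOrthonormalBasis ℝ K).reindex (finCongr hfrk) with hb
  set g : Fin (N - M) → EuclideanSpace ℝ (Fin N) := fun j => (b j : _) with hg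
  have hgon : Orthonormal ℝ g := by
    rw [orthonormal_iff_ite]
    intro i j
    have := b.orthonormal
    rw [orthonormal_iff_ite] at this
    simpa [hg, Submodule.coe_inner] using this i j
  have hgK : ∀ j, g j ∈ K := fun j => (b j).2
  -- the combined family is an orthonormal basis of ℝ^N
  set v : Fin M ⊕ Fin (N - M) → EuclideanSpace ℝ (Fin N) := Sum.elim r g with hv
  have hcross : ∀ m j, ⟪r m, g j⟫_ℝ = 0 := by
    intro m j
    exact (Submodule.mem_orthogonal _ _).1 (hgK j) (r m)
      (Submodule.subset_span ⟨m, rfl⟩)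
  have hvon : Orthonormal ℝ v := by
    rw [orthonormal_iff_ite]
    rintro (m | j) (m' | j')
    · have := hron; rw [orthonormal_iff_ite] at this; simpa [hv] using this m m'
    · simpa [hv] using hcross m j'
    · rw [real_inner_comm]; simpa [hv] using hcross m' j
    · have := hgon; rw [orthonormal_iff_ite] at this; simpa [hv] using this j j'
  have hspan : ⊤ ≤ Submodule.span ℝ (Set.range v) := by
    apply le_of_eq
    symm
    apply Submodule.eq_top_of_finrank_eq
    rw [finrank_span_eq_card hvon.linearIndependent, finrank_euclideanSpace_fin]
    simp [Fintype.card_sum]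
    omega
  set B : OrthonormalBasis (Fin M ⊕ Fin (N - M)) ℝ (EuclideanSpace ℝ (Fin N)) :=
    OrthonormalBasis.mk hvon hspan with hB
  have hBv : ∀ i, B i = v i := fun i => by rw [hB, OrthonormalBasis.coe_mk]
  -- Parseval on pairs of standard basis vectors
  have hkey : ∀ n n' : Fin N, ∑ j, g j n * g j n'
      = (if n = n' then 1 else 0) - ((M:ℝ)/N) * ⟪φ n, φ n'⟫_ℝ := by
    intro n n'
    have h1 := B.sum_inner_mul_inner (EuclideanSpace.single n 1)
      (EuclideanSpace.single n' 1)
    simp only [EuclideanSpace.inner_single_left, EuclideanSpace.inner_single_right,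
      map_one, one_mul, mul_one, conj_trivial, EuclideanSpace.single_apply,
      hBv] at h1
    rw [Fintype.sum_sum_type] at h1
    simp only [hv, Sum.elim_inl, Sum.elim_inr] at h1
    have h2 : ∑ m, (r m) n * (r m) n' = ((M:ℝ)/N) * ⟪φ n, φ n'⟫_ℝ := by
      rw [euc_inner_eq, Finset.mul_sum, ← hs2]
      exact Finset.sum_congr rfl (fun m _ => by simp only [hr]; ring)
    rw [h2] at h1
    have h3 : (if n' = n then (1:ℝ) else 0) = (if n = n' then 1 else 0) := by
      simp [eq_comm]
    rw [h3] at h1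
    linarith
  -- the Naimark complement
  set t : ℝ := Real.sqrt ((N:ℝ)/((N - M : ℕ):ℝ)) with ht
  have ht2 : t * t = (N:ℝ)/((N - M : ℕ):ℝ) := Real.mul_self_sqrt (by positivity)
  set ψ : Fin N → EuclideanSpace ℝ (Fin (N - M)) :=
    fun n => WithLp.toLp 2 (fun j => t * g j n : Fin (N - M) → ℝ) with hψ
  have hψinner : ∀ n n', ⟪ψ n, ψ n'⟫_ℝ
      = ((N:ℝ)/((N - M : ℕ):ℝ)) *
        ((if n = n' then 1 else 0) - ((M:ℝ)/N) * ⟪φ n, φ n'⟫_ℝ) := by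
    intro n n'
    rw [euc_inner_eq, ← hkey n n', ← ht2, Finset.mul_sum]
    exact Finset.sum_congr rfl (fun j _ => by simp only [hψ]; ring)
  have hφself : ∀ n, ⟪φ n, φ n⟫_ℝ = 1 := by
    intro n
    rw [real_inner_self_eq_norm_mul_norm, hnorm n, one_mul]
  have hψself : ∀ n, ⟪ψ n, ψ n⟫_ℝ = 1 := by
    intro n
    have hNM0 : (N:ℝ) - M ≠ 0 := by rw [← hdR]; exact ne_of_gt hdpos
    rw [hψinner n n, hφself n, if_pos rfl, hdR]
    field_simp
  refine ⟨ψ, ?_, ?_, ?_⟩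
  · intro n
    have h1 := hψself n
    rw [real_inner_self_eq_norm_mul_norm] at h1
    rcases mul_self_eq_one_iff.1 h1 with h2 | h2
    · exact h2
    · nlinarith [norm_nonneg (ψ n)]
  · refine ⟨((M:ℝ)/((N - M : ℕ):ℝ)) * c, fun i j hij => ?_⟩
    rw [hψinner i j, if_neg hij]
    rw [zero_sub, abs_mul, abs_neg, abs_mul, hc i j hij]
    rw [abs_of_pos (by positivity), abs_of_pos (by positivity)]
    field_simp
  · intro x
    ext j
    rw [euc_sum_apply]
    have hlhs : ∀ n, (⟪x, ψ n⟫_ℝ • ψ n) j = ⟪x, ψ n⟫_ℝ * ψ n j := fun n => rfl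
    simp only [hlhs]
    have : ∀ n, ⟪x, ψ n⟫_ℝ * ψ n j = ∑ k, x k * (ψ n k * ψ n j) := by
      intro n
      rw [euc_inner_eq, Finset.sum_mul]
      exact Finset.sum_congr rfl (fun k _ => by ring)
    rw [Finset.sum_congr rfl (fun n _ => this n), Finset.sum_comm]
    have hcol : ∀ k, ∑ n, ψ n k * ψ n j
        = ((N:ℝ)/((N - M : ℕ):ℝ)) * (if k = j then 1 else 0) := by
      intro k
      have hgkj : ∑ n, g k n * g j n = (if k = j then 1 else 0) := by
        have := hgon; rw [orthonormal_iff_ite] at this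
        have h4 := this k j
        rw [euc_inner_eq] at h4
        exact h4
      rw [← hgkj, ← ht2, Finset.mul_sum]
      exact Finset.sum_congr rfl (fun n _ => by simp only [hψ]; ring)
    have hrhs : (((N:ℝ) / ((N - M : ℕ):ℝ)) • x) j
        = ((N:ℝ)/((N - M : ℕ):ℝ)) * x j := rfl
    rw [hrhs]
    calc ∑ k, ∑ n, x k * (ψ n k * ψ n j)
        = ∑ k, x k * (((N:ℝ)/((N - M : ℕ):ℝ)) * (if k = j then 1 else 0)) := by
          refine Finset.sum_congr rfl (fun k _ => ?_)
          rw [← Finset.mul_sum, hcol k]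
      _ = ((N:ℝ)/((N - M : ℕ):ℝ)) * x j := by
          rw [Finset.sum_eq_single j]
          · rw [if_pos rfl, mul_one]; ring
          · intro k _ hkj; rw [if_neg hkj, mul_zero, mul_zero]
          · intro hj; exact absurd (Finset.mem_univ j) hj
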